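/- Let n ≥ 1, H_1 ≥ H_2 ≥ ... ≥ H_n > 0, and B > 0. The function F(p_1, ..., p_n) = -Σ_{j=1}^n B log₂(1 + p_j / (Σ_{k=j+1}^n p_k + H_j)) is convex on the set {p ∈ ℝⁿ : p ≥ 0}. -/

import Mathlib

open Finset

lemma noma_aux_gconc (a b : ℝ) (hb : 0 < b) (hba : b ≤ a) :
    ConcaveOn ℝ (Set.Ici (0:ℝ))
      (fun x => Real.log (x + b) - Real.log (x + a)) := by
  have ha : 0 < a := lt_of_lt_of_le hb hba
  have key : ∀ x : ℝ, 0 ≤ x → HasDerivAt (fun x => Real.log (x + b) - Real.log (x + a))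
      ((x + b)⁻¹ - (x + a)⁻¹) x := by
    intro x hx
    have hxb : x + b ≠ 0 := by positivity
    have hxa : x + a ≠ 0 := by positivity
    have h1 : HasDerivAt (fun x : ℝ => Real.log (x + b)) ((x + b)⁻¹) x := by
      simpa [Function.comp_def] using (Real.hasDerivAt_log hxb).comp x ((hasDerivAt_id x).add_const b)
    have h2 : HasDerivAt (fun x : ℝ => Real.log (x + a)) ((x + a)⁻¹) x := by
      simpa [Function.comp_def] using (Real.hasDerivAt_log hxa).comp x ((hasDerivAt_id x).add_const a)
    exact h1.sub h2
  have key2 : ∀ x : ℝ, 0 ≤ x → HasDerivAt (fun x : ℝ => (x + b)⁻¹ - (x + a)⁻¹)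
      (-((x + b) ^ 2)⁻¹ + ((x + a) ^ 2)⁻¹) x := by
    intro x hx
    have hxb : x + b ≠ 0 := by positivity
    have hxa : x + a ≠ 0 := by positivity
    have h1 : HasDerivAt (fun x : ℝ => (x + b)⁻¹) (-1 / (x + b) ^ 2) x := by
      simpa [Pi.inv_def] using ((hasDerivAt_id x).add_const b).inv hxb
    have h2 : HasDerivAt (fun x : ℝ => (x + a)⁻¹) (-1 / (x + a) ^ 2) x := by
      simpa [Pi.inv_def] using ((hasDerivAt_id x).add_const a).inv hxa
    have := h1.sub h2
    rw [show -((x + b) ^ 2)⁻¹ + ((x + a) ^ 2)⁻¹ = -1 / (x + b) ^ 2 - -1 / (x + a) ^ 2 by ring]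
    exact this
  apply concaveOn_of_hasDerivWithinAt2_nonpos (f' := fun x => (x + b)⁻¹ - (x + a)⁻¹)
    (f'' := fun x => -((x + b) ^ 2)⁻¹ + ((x + a) ^ 2)⁻¹) (convex_Ici 0)
  · intro x hx
    exact (key x hx).continuousAt.continuousWithinAt
  · intro x hx
    rw [interior_Ici] at hx
    exact (key x (le_of_lt hx)).hasDerivWithinAt
  · intro x hx
    rw [interior_Ici] at hx
    exact (key2 x (le_of_lt hx)).hasDerivWithinAt
  · intro x hx
    rw [interior_Ici] at hx
    have hx' : (0:ℝ) < x := hx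
    have h1 : (0:ℝ) < x + b := by linarith
    have h2 : (x + b) ^ 2 ≤ (x + a) ^ 2 := by nlinarith
    have : ((x + a) ^ 2)⁻¹ ≤ ((x + b) ^ 2)⁻¹ := by
      apply inv_anti₀ (by positivity) h2
    linarith

lemma noma_aux_lconc (a : ℝ) (ha : 0 < a) :
    ConcaveOn ℝ (Set.Ici (0:ℝ)) (fun x => Real.log (x + a)) := by
  have hlog := strictConcaveOn_log_Ioi.concaveOn
  refine ⟨convex_Ici 0, ?_⟩
  intro x hx y hy s t hs ht hst
  have hx' : x + a ∈ Set.Ioi (0:ℝ) := by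
    simp only [Set.mem_Ioi]; have := Set.mem_Ici.1 hx; linarith
  have hy' : y + a ∈ Set.Ioi (0:ℝ) := by
    simp only [Set.mem_Ioi]; have := Set.mem_Ici.1 hy; linarith
  have := hlog.2 hx' hy' hs ht hst
  simp only [smul_eq_mul] at this ⊢
  have harg : s * x + t * y + a = s * (x + a) + t * (y + a) := by
    rw [show s * (x + a) + t * (y + a) = s * x + t * y + (s + t) * a from by ring, hst, one_mul]
  rw [harg]
  exact this

lemma noma_set_convex : Convex ℝ {p : ℕ → ℝ | ∀ j, 0 ≤ p j} := by
  intro x hx y hy s t hs ht hst j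
  have := hx j
  have := hy j
  simp only [Pi.add_apply, Pi.smul_apply, smul_eq_mul]
  positivity

lemma noma_comp (n j : ℕ) {g : ℝ → ℝ} (hg : ConcaveOn ℝ (Set.Ici (0:ℝ)) g) :
    ConcaveOn ℝ {p : ℕ → ℝ | ∀ i, 0 ≤ p i}
      (fun p => g (∑ k ∈ Icc j n, p k)) := by
  refine ⟨noma_set_convex, ?_⟩
  intro x hx y hy s t hs ht hst
  have hx' : (∑ k ∈ Icc j n, x k) ∈ Set.Ici (0:ℝ) :=
    Finset.sum_nonneg fun k _ => hx k
  have hy' : (∑ k ∈ Icc j n, y k) ∈ Set.Ici (0:ℝ) :=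
    Finset.sum_nonneg fun k _ => hy k
  have harg : ∑ k ∈ Icc j n, (s • x + t • y) k
      = s • (∑ k ∈ Icc j n, x k) + t • (∑ k ∈ Icc j n, y k) := by
    simp only [Pi.add_apply, Pi.smul_apply, smul_eq_mul, Finset.mul_sum, ← Finset.sum_add_distrib]
  dsimp only
  rw [harg]
  exact hg.2 hx' hy' hs ht hst

lemma noma_sum_conc {s : Set (ℕ → ℝ)} (hs : Convex ℝ s) (t : Finset ℕ)
    (f : ℕ → (ℕ → ℝ) → ℝ) (h : ∀ i ∈ t, ConcaveOn ℝ s (f i)) :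
    ConcaveOn ℝ s (fun p => ∑ i ∈ t, f i p) := by
  classical
  induction t using Finset.induction_on with
  | empty => simpa using concaveOn_const (0:ℝ) hs
  | insert a t hnot ih =>
    simp only [Finset.sum_insert hnot]
    exact (h a (Finset.mem_insert_self a t)).add
      (ih fun i hi => h i (Finset.mem_insert_of_mem hi))

lemma noma_rearr (A D : ℕ → ℝ) (n : ℕ) (hn : 1 ≤ n) :
    ∑ j ∈ Icc 1 n, (A j - D (j + 1))
      = A 1 - D (n + 1) + ∑ j ∈ Icc 2 n, (A j - D j) := by
  induction n, hn using Nat.le_induction with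
  | base => simp
  | succ n hn ih =>
    rw [Finset.sum_Icc_succ_top (by omega), ih, Finset.sum_Icc_succ_top (by omega : 2 ≤ n + 1)]
    ring

theorem noma_neg_sum_rate_convex (n : ℕ) (hn : 1 ≤ n) (B : ℝ) (hB : 0 < B)
    (H : ℕ → ℝ)
    (hHpos : ∀ j ∈ Icc 1 n, 0 < H j)
    (hHmono : ∀ j k, 1 ≤ j → j ≤ k → k ≤ n → H k ≤ H j) :
    ConvexOn ℝ {p : ℕ → ℝ | ∀ j, 0 ≤ p j}
      (fun p => -∑ j ∈ Icc 1 n,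
        B * Real.logb 2 (1 + p j / (∑ k ∈ Icc (j + 1) n, p k + H j))) := by
  have hlog2 : (0:ℝ) < Real.log 2 := Real.log_pos one_lt_two
  have hcnn : (0:ℝ) ≤ B / Real.log 2 := div_nonneg hB.le hlog2.le
  set s : Set (ℕ → ℝ) := {p : ℕ → ℝ | ∀ j, 0 ≤ p j} with hs_def
  have hsconv : Convex ℝ s := noma_set_convex
  set T : ℕ → (ℕ → ℝ) → ℝ := fun j p => ∑ k ∈ Icc j n, p k with hT_def
  set G : (ℕ → ℝ) → ℝ := fun p => (B / Real.log 2) *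
    ((Real.log (T 1 p + H 1) - Real.log (H n)) +
      ∑ j ∈ Icc 2 n, (Real.log (T j p + H j) - Real.log (T j p + H (j - 1)))) with hG_def
  -- concavity of G
  have h1 : ConcaveOn ℝ s (fun p => Real.log (T 1 p + H 1)) :=
    noma_comp n 1 (noma_aux_lconc (H 1) (hHpos 1 (by simp [hn])))
  have hc : ConcaveOn ℝ s (fun _ => -Real.log (H n)) := concaveOn_const _ hsconv
  have h2 : ConcaveOn ℝ s
      (fun p => ∑ j ∈ Icc 2 n, (Real.log (T j p + H j) - Real.log (T j p + H (j - 1)))) := by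
    apply noma_sum_conc hsconv
    intro j hj
    rw [Finset.mem_Icc] at hj
    have hj1 : 1 ≤ j - 1 := by omega
    have hjn : j - 1 ≤ n := by omega
    have hbpos : 0 < H j := hHpos j (by rw [Finset.mem_Icc]; omega)
    have hba : H j ≤ H (j - 1) := hHmono (j - 1) j hj1 (by omega) (by omega)
    exact noma_comp n j (noma_aux_gconc (H (j - 1)) (H j) hbpos hba)
  have hGconc : ConcaveOn ℝ s G := by
    have hcomb := (((h1.add hc).add h2).smul hcnn)
    have heq : (B / Real.log 2) •
        (((fun p => Real.log (T 1 p + H 1)) + fun _ => -Real.log (H n)) +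
          fun p => ∑ j ∈ Icc 2 n, (Real.log (T j p + H j) - Real.log (T j p + H (j - 1)))) = G := by
      funext p
      simp only [hG_def, Pi.smul_apply, Pi.add_apply, smul_eq_mul]
      ring
    rw [← heq]
    exact hcomb
  -- pointwise identity on s
  have hFG : ∀ p ∈ s, (-∑ j ∈ Icc 1 n,
      B * Real.logb 2 (1 + p j / (∑ k ∈ Icc (j + 1) n, p k + H j))) = -G p := by
    intro p hp
    have hterm : ∀ j ∈ Icc 1 n,
        B * Real.logb 2 (1 + p j / (∑ k ∈ Icc (j + 1) n, p k + H j))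
          = (B / Real.log 2) *
            (Real.log (T j p + H j) - Real.log (T (j + 1) p + H j)) := by
      intro j hj
      rw [Finset.mem_Icc] at hj
      have hHj : 0 < H j := hHpos j (by rw [Finset.mem_Icc]; omega)
      have hd : 0 < T (j + 1) p + H j := by
        have : 0 ≤ T (j + 1) p := Finset.sum_nonneg fun k _ => hp k
        linarith
      have hTsplit : T j p = p j + T (j + 1) p := by
        simp only [hT_def]
        rw [Finset.Icc_add_one_left_eq_Ioc, Finset.Icc_eq_cons_Ioc hj.2, Finset.sum_cons]
      have hnum : 0 < T j p + H j := by
        have := hp j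
        rw [hTsplit]; linarith
      have harg : 1 + p j / (T (j + 1) p + H j) = (T j p + H j) / (T (j + 1) p + H j) := by
        rw [hTsplit]
        field_simp
        ring
      show B * Real.logb 2 (1 + p j / (T (j + 1) p + H j)) = _
      rw [harg, Real.logb, Real.log_div hnum.ne' hd.ne']
      ring
    rw [Finset.sum_congr rfl hterm, ← Finset.mul_sum]
    have hshift : ∀ j, Real.log (T (j + 1) p + H j)
        = (fun j => Real.log (T j p + H (j - 1))) (j + 1) := by
      intro j; simp
    have hsum : ∑ j ∈ Icc 1 n, (Real.log (T j p + H j) - Real.log (T (j + 1) p + H j))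
        = Real.log (T 1 p + H 1) - Real.log (T (n + 1) p + H n)
          + ∑ j ∈ Icc 2 n, (Real.log (T j p + H j) - Real.log (T j p + H (j - 1))) := by
      have := noma_rearr (fun j => Real.log (T j p + H j))
        (fun j => Real.log (T j p + H (j - 1))) n hn
      simpa using this
    have hTn1 : T (n + 1) p = 0 := by
      simp only [hT_def]
      rw [Finset.Icc_eq_empty (by omega), Finset.sum_empty]
    rw [hsum, hTn1, zero_add]
  -- conclude
  have hneg : ConvexOn ℝ s (-G) := hGconc.neg
  refine ⟨hsconv, ?_⟩
  intro x hx y hy a b ha hb hab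
  have hmem : a • x + b • y ∈ s := hsconv hx hy ha hb hab
  have e1 := hFG _ hmem
  have e2 := hFG _ hx
  have e3 := hFG _ hy
  simp only [smul_eq_mul] at *
  rw [e1, e2, e3]
  have := hneg.2 hx hy ha hb hab
  simpa using this
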